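/- For every positive integer m ≥ 1 and real α, the integral ∫₀^∞ exp(-π m w²/2) · erfc(√(π/2)·w)^m · (cos(α π w²/2) + i sin(α π w²/2)) dw is a nonzero complex number, where erfc(x) = (2/√π)∫ₓ^∞ e^{-y²} dy. -/

import Mathlib

open Real MeasureTheory

noncomputable def erfc (x : ℝ) : ℝ := (2 / Real.sqrt π) * ∫ y in Set.Ioi x, Real.exp (-y ^ 2)

namespace IntAux

open Set Filter Topology

lemma integrable_gauss : Integrable (fun y : ℝ => Real.exp (-y ^ 2)) := by
  have h := integrable_exp_neg_mul_sq (one_pos (α := ℝ))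
  simpa using h

lemma hasDerivAt_erfc (x : ℝ) :
    HasDerivAt erfc (-(2 / Real.sqrt π) * Real.exp (-x ^ 2)) x := by
  have key : erfc = fun t =>
      ((2 / Real.sqrt π) * ∫ y in Set.Ioi (0:ℝ), Real.exp (-y ^ 2))
        - (2 / Real.sqrt π) * ∫ y in (0:ℝ)..t, Real.exp (-y ^ 2) := by
    funext t
    have hIoi : ∀ s : ℝ, (∫ y in Set.Ioi s, Real.exp (-y ^ 2))
        = (∫ y : ℝ, Real.exp (-y ^ 2)) - ∫ y in Set.Iic s, Real.exp (-y ^ 2) := by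
      intro s
      have := integral_add_compl (measurableSet_Iic (a := s)) integrable_gauss
      rw [Set.compl_Iic] at this
      linarith
    have hsub : (∫ y in Set.Iic t, Real.exp (-y ^ 2)) - (∫ y in Set.Iic (0:ℝ), Real.exp (-y ^ 2))
        = ∫ y in (0:ℝ)..t, Real.exp (-y ^ 2) :=
      intervalIntegral.integral_Iic_sub_Iic integrable_gauss.integrableOn integrable_gauss.integrableOn
    unfold erfc
    rw [hIoi, hIoi]
    rw [← hsub]
    ring
  rw [key]
  have h1 : HasDerivAt (fun t => ∫ y in (0:ℝ)..t, Real.exp (-y ^ 2)) (Real.exp (-x ^ 2)) x := by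
    apply intervalIntegral.integral_hasDerivAt_right
    · exact integrable_gauss.intervalIntegrable
    · exact (by continuity : Continuous fun y : ℝ => Real.exp (-y ^ 2)).stronglyMeasurableAtFilter _ _
    · exact (by continuity : Continuous fun y : ℝ => Real.exp (-y ^ 2)).continuousAt
  simpa using (h1.const_mul (2 / Real.sqrt π)).const_sub _

lemma erfc_pos (x : ℝ) : 0 < erfc x := by
  unfold erfc
  have h1 : (0:ℝ) < 2 / Real.sqrt π := by
    have := Real.sqrt_pos.2 Real.pi_pos
    positivity
  refine mul_pos h1 ?_
  rw [setIntegral_pos_iff_support_of_nonneg_ae ?_ integrable_gauss.integrableOn]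
  · have : Function.support (fun y : ℝ => Real.exp (-y ^ 2)) = Set.univ := by
      ext y; simp [Function.mem_support, (Real.exp_pos _).ne']
    rw [this, Set.univ_inter]
    simp [Real.volume_Ioi]
  · filter_upwards with y using (Real.exp_pos _).le

lemma erfc_le_two (x : ℝ) : erfc x ≤ 2 := by
  unfold erfc
  have h1 : (∫ y in Set.Ioi x, Real.exp (-y ^ 2)) ≤ ∫ y, Real.exp (-y ^ 2) := by
    apply setIntegral_le_integral integrable_gauss
    filter_upwards with y using (Real.exp_pos _).le
  have h2 : (∫ y : ℝ, Real.exp (-y ^ 2)) = Real.sqrt π := by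
    have := integral_gaussian 1
    simpa using this
  have hπ : (0:ℝ) < Real.sqrt π := Real.sqrt_pos.2 Real.pi_pos
  calc (2 / Real.sqrt π) * ∫ y in Set.Ioi x, Real.exp (-y ^ 2)
      ≤ (2 / Real.sqrt π) * Real.sqrt π := by
        apply mul_le_mul_of_nonneg_left (h1.trans h2.le) (by positivity)
    _ = 2 := by field_simp

noncomputable def E (w : ℝ) : ℝ := erfc (Real.sqrt (π / 2) * w)

lemma hasDerivAt_E (w : ℝ) :
    HasDerivAt E (-Real.sqrt 2 * Real.exp (-π * w ^ 2 / 2)) w := by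
  have hπ : (0:ℝ) < π := Real.pi_pos
  have h0 : HasDerivAt (fun w : ℝ => Real.sqrt (π / 2) * w) (Real.sqrt (π / 2)) w := by
    simpa using (hasDerivAt_id w).const_mul (Real.sqrt (π / 2))
  have h1 := (hasDerivAt_erfc (Real.sqrt (π / 2) * w)).comp w h0
  convert! h1 using 1
  have hsq : (Real.sqrt (π / 2) * w) ^ 2 = π / 2 * w ^ 2 := by
    rw [mul_pow, Real.sq_sqrt (by positivity)]
  have hc0 : (0:ℝ) ≤ 2 / Real.sqrt π * Real.sqrt (π / 2) := by positivity
  have hc : 2 / Real.sqrt π * Real.sqrt (π / 2) = Real.sqrt 2 := by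
    rw [← Real.sqrt_sq hc0]
    congr 1
    rw [mul_pow, div_pow, Real.sq_sqrt hπ.le, Real.sq_sqrt (by positivity : (0:ℝ) ≤ π / 2)]
    field_simp
  rw [hsq, show -(π / 2 * w ^ 2) = -π * w ^ 2 / 2 by ring]
  linear_combination (Real.exp (-π * w ^ 2 / 2)) * hc


lemma E_pos (w : ℝ) : 0 < E w := erfc_pos _
lemma E_le_two (w : ℝ) : E w ≤ 2 := erfc_le_two _

noncomputable def f (m : ℕ) (w : ℝ) : ℝ := Real.exp (-π * m * w ^ 2 / 2) * (E w) ^ m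

noncomputable def f' (m : ℕ) (w : ℝ) : ℝ :=
  -((m : ℝ) * Real.exp (-π * m * w ^ 2 / 2) * E w ^ (m - 1) *
      (π * w * E w + Real.sqrt 2 * Real.exp (-π * w ^ 2 / 2)))

lemma hasDerivAt_f (m : ℕ) (hm : 1 ≤ m) (w : ℝ) : HasDerivAt (f m) (f' m w) w := by
  have h1 : HasDerivAt (fun w : ℝ => Real.exp (-π * m * w ^ 2 / 2))
      (Real.exp (-π * m * w ^ 2 / 2) * (-π * m * w)) w := by
    have hp : HasDerivAt (fun w : ℝ => -π * m * w ^ 2 / 2) (-π * m * w) w := by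
      have := ((hasDerivAt_pow 2 w).const_mul (-π * (m:ℝ))).div_const 2
      convert! this using 1
      ring
    exact hp.exp
  have h2 : HasDerivAt (fun w : ℝ => E w ^ m)
      ((m : ℝ) * E w ^ (m - 1) * (-Real.sqrt 2 * Real.exp (-π * w ^ 2 / 2))) w :=
    (hasDerivAt_E w).pow m
  have h3 := h1.mul h2
  convert! h3 using 1
  unfold f'
  have hEm : E w ^ m = E w ^ (m - 1) * E w := by
    conv_lhs => rw [show m = (m - 1) + 1 from (Nat.succ_pred_eq_of_pos hm).symm]
    rw [pow_succ]
  rw [hEm]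
  ring

lemma f_pos (m : ℕ) (w : ℝ) : 0 < f m w := by
  unfold f
  exact mul_pos (Real.exp_pos _) (pow_pos (E_pos w) m)

lemma f_le (m : ℕ) (w : ℝ) : f m w ≤ 2 ^ m * Real.exp (-π * m * w ^ 2 / 2) := by
  unfold f
  rw [mul_comm]
  apply mul_le_mul_of_nonneg_right _ (Real.exp_pos _).le
  exact pow_le_pow_left₀ (E_pos w).le (E_le_two w) m

lemma f'_neg (m : ℕ) (hm : 1 ≤ m) {w : ℝ} (hw : 0 ≤ w) : f' m w < 0 := by
  unfold f'
  rw [neg_lt_zero]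
  have h1 : (0:ℝ) < π * w * E w + Real.sqrt 2 * Real.exp (-π * w ^ 2 / 2) := by
    have : (0:ℝ) ≤ π * w * E w := by
      have := Real.pi_pos
      have := E_pos w
      positivity
    nlinarith [Real.exp_pos (-π * w ^ 2 / 2), Real.sqrt_pos.2 (by norm_num : (0:ℝ) < 2)]
  have hm' : (0:ℝ) < (m:ℝ) := by exact_mod_cast hm
  have := Real.exp_pos (-π * m * w ^ 2 / 2)
  have := pow_pos (E_pos w) (m - 1)
  positivity

lemma abs_f' (m : ℕ) (w : ℝ) : |f' m w| ≤
    (m:ℝ) * 2 ^ (m - 1) * (2 * π * |w| + Real.sqrt 2) * Real.exp (-π * m * w ^ 2 / 2) := by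
  unfold f'
  rw [abs_neg]
  have h0 : (0:ℝ) ≤ π := Real.pi_pos.le
  have hE := E_pos w
  have hE2 := E_le_two w
  have hEp : E w ^ (m-1) ≤ 2 ^ (m-1) := pow_le_pow_left₀ hE.le hE2 _
  have hexp := (Real.exp_pos (-π * m * w ^ 2 / 2)).le
  have hexp2 : Real.exp (-π * w ^ 2 / 2) ≤ 1 :=
    Real.exp_le_one_iff.2 (by nlinarith [sq_nonneg w])
  have habs : |π * w * E w + Real.sqrt 2 * Real.exp (-π * w ^ 2 / 2)|
      ≤ 2 * π * |w| + Real.sqrt 2 := by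
    refine (abs_add_le _ _).trans ?_
    have h1 : |π * w * E w| ≤ 2 * π * |w| := by
      rw [abs_mul, abs_mul, abs_of_nonneg h0, abs_of_nonneg hE.le]
      nlinarith [mul_nonneg h0 (abs_nonneg w)]
    have h2 : |Real.sqrt 2 * Real.exp (-π * w ^ 2 / 2)| ≤ Real.sqrt 2 := by
      rw [abs_mul, abs_of_nonneg (Real.sqrt_nonneg 2),
        abs_of_nonneg (Real.exp_pos _).le]
      nlinarith [Real.sqrt_nonneg 2, (Real.exp_pos (-π * w ^ 2 / 2)).le]
    linarith
  rw [abs_mul]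
  have hA : |(m:ℝ) * Real.exp (-π * m * w ^ 2 / 2) * E w ^ (m - 1)|
      ≤ (m:ℝ) * Real.exp (-π * m * w ^ 2 / 2) * 2 ^ (m - 1) := by
    rw [abs_of_nonneg (by positivity)]
    exact mul_le_mul_of_nonneg_left hEp (by positivity)
  calc |(m:ℝ) * Real.exp (-π * m * w ^ 2 / 2) * E w ^ (m - 1)| *
        |π * w * E w + Real.sqrt 2 * Real.exp (-π * w ^ 2 / 2)|
      ≤ ((m:ℝ) * Real.exp (-π * m * w ^ 2 / 2) * 2 ^ (m - 1)) * (2 * π * |w| + Real.sqrt 2) := by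
        apply mul_le_mul hA habs (abs_nonneg _) (by positivity)
    _ = (m:ℝ) * 2 ^ (m - 1) * (2 * π * |w| + Real.sqrt 2) * Real.exp (-π * m * w ^ 2 / 2) := by
        ring

lemma continuous_E : Continuous E :=
  continuous_iff_continuousAt.2 fun w => (hasDerivAt_E w).continuousAt

lemma continuous_f (m : ℕ) : Continuous (f m) := by
  unfold f; exact ((continuous_const.mul (continuous_pow 2)).div_const 2).rexp.mul
    (continuous_E.pow m)

lemma continuous_f' (m : ℕ) : Continuous (f' m) := by
  unfold f'
  apply Continuous.neg
  apply Continuous.mul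
  · exact (continuous_const.mul (((continuous_const.mul (continuous_pow 2)).div_const 2).rexp)).mul
      (continuous_E.pow _)
  · exact ((continuous_const.mul continuous_id).mul continuous_E).add
      (continuous_const.mul ((continuous_const.mul (continuous_pow 2)).div_const 2).rexp)

lemma hb_pos (m : ℕ) (hm : 1 ≤ m) : (0:ℝ) < π * m / 2 := by
  have : (0:ℝ) < (m:ℝ) := by exact_mod_cast hm
  have := Real.pi_pos
  positivity

lemma exp_eq (m : ℕ) (w : ℝ) : Real.exp (-π * m * w ^ 2 / 2) = Real.exp (-(π * m / 2) * w ^ 2) := by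
  ring_nf

lemma integrable_f (m : ℕ) (hm : 1 ≤ m) : Integrable (f m) := by
  apply Integrable.mono' (g := fun w => 2 ^ m * Real.exp (-(π * m / 2) * w ^ 2))
  · exact (integrable_exp_neg_mul_sq (hb_pos m hm)).const_mul _
  · exact (continuous_f m).aestronglyMeasurable
  · filter_upwards with w
    rw [Real.norm_eq_abs, abs_of_pos (f_pos m w), ← exp_eq]
    exact f_le m w

lemma integrable_f' (m : ℕ) (hm : 1 ≤ m) : Integrable (f' m) := by
  have hb := hb_pos m hm
  have h1 : Integrable (fun w : ℝ => |w| * Real.exp (-(π * m / 2) * w ^ 2)) := by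
    have h0 := (integrable_rpow_mul_exp_neg_mul_sq hb (by norm_num : (-1:ℝ) < 1)).abs
    simpa [Real.rpow_one, abs_mul, Real.abs_exp, abs_abs] using h0
  have h2 : Integrable (fun w : ℝ => Real.exp (-(π * m / 2) * w ^ 2)) :=
    integrable_exp_neg_mul_sq hb
  apply Integrable.mono'
    (g := fun w => ((m:ℝ) * 2 ^ (m - 1) * (2 * π)) * (|w| * Real.exp (-(π * m / 2) * w ^ 2))
      + ((m:ℝ) * 2 ^ (m - 1) * Real.sqrt 2) * Real.exp (-(π * m / 2) * w ^ 2))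
  · exact (h1.const_mul _).add (h2.const_mul _)
  · exact (continuous_f' m).aestronglyMeasurable
  · filter_upwards with w
    rw [Real.norm_eq_abs]
    refine (abs_f' m w).trans ?_
    rw [← exp_eq]
    nlinarith [Real.exp_pos (-π * m * w ^ 2 / 2), abs_nonneg w, Real.sqrt_nonneg 2,
      mul_nonneg (mul_nonneg (Nat.cast_nonneg m) (by positivity : (0:ℝ) ≤ 2 ^ (m-1))) (abs_nonneg w)]

noncomputable def G (m : ℕ) (w : ℝ) : ℝ := f m w / w
noncomputable def G' (m : ℕ) (w : ℝ) : ℝ := (f' m w * w - f m w) / w ^ 2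
noncomputable def u (m : ℕ) (β : ℝ) (w : ℝ) : ℝ := G m w * (1 - Real.cos (β * w ^ 2))
noncomputable def u' (m : ℕ) (β : ℝ) (w : ℝ) : ℝ :=
  G' m w * (1 - Real.cos (β * w ^ 2)) + 2 * β * (f m w * Real.sin (β * w ^ 2))

lemma hasDerivAt_G (m : ℕ) (hm : 1 ≤ m) {w : ℝ} (hw : w ≠ 0) :
    HasDerivAt (G m) (G' m w) w := by
  have h := (hasDerivAt_f m hm w).div (hasDerivAt_id w) hw
  convert! h using 1
  simp [G']

lemma G'_neg (m : ℕ) (hm : 1 ≤ m) {w : ℝ} (hw : 0 < w) : G' m w < 0 := by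
  unfold G'
  apply div_neg_of_neg_of_pos _ (by positivity)
  nlinarith [f'_neg m hm hw.le, f_pos m w]

lemma hasDerivAt_oneSubCos (β w : ℝ) :
    HasDerivAt (fun w => 1 - Real.cos (β * w ^ 2)) (Real.sin (β * w ^ 2) * (β * (2 * w))) w := by
  have hin : HasDerivAt (fun w : ℝ => β * w ^ 2) (β * (2 * w)) w := by
    have := (hasDerivAt_pow 2 w).const_mul β
    convert! this using 1
    ring
  have := (hin.cos).const_sub 1
  convert! this using 1
  ring

lemma hasDerivAt_u (m : ℕ) (hm : 1 ≤ m) (β : ℝ) {w : ℝ} (hw : 0 < w) :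
    HasDerivAt (u m β) (u' m β w) w := by
  have h := (hasDerivAt_G m hm hw.ne').mul (hasDerivAt_oneSubCos β w)
  convert! h using 1
  unfold u' G
  have : f m w / w * (Real.sin (β * w ^ 2) * (β * (2 * w))) = 2 * β * (f m w * Real.sin (β * w ^ 2)) := by
    field_simp
  rw [this]

lemma one_sub_cos_le (x : ℝ) : 1 - Real.cos x ≤ x ^ 2 / 2 := by
  have h1 : Real.cos (x / 2) ^ 2 = 1 / 2 + Real.cos x / 2 := by
    have := Real.cos_sq (x / 2)
    rwa [mul_div_cancel₀ x two_ne_zero] at this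
  have h2 : Real.sin (x / 2) ^ 2 + Real.cos (x / 2) ^ 2 = 1 := Real.sin_sq_add_cos_sq _
  have h3 : |Real.sin (x / 2)| ≤ |x / 2| := Real.abs_sin_le_abs
  have h4 : Real.sin (x / 2) ^ 2 ≤ (x / 2) ^ 2 := by
    rw [← sq_abs, ← sq_abs (x / 2)]
    exact pow_le_pow_left₀ (abs_nonneg _) h3 2
  nlinarith

lemma one_sub_cos_nonneg (x : ℝ) : 0 ≤ 1 - Real.cos x := by
  nlinarith [Real.cos_le_one x]

lemma tendsto_u_atTop (m : ℕ) (hm : 1 ≤ m) (β : ℝ) : Tendsto (u m β) atTop (𝓝 0) := by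
  have hg : Tendsto (fun w : ℝ => 2 ^ (m + 1) * Real.exp (-(π * m / 2) * w ^ 2)) atTop (𝓝 0) := by
    have h1 : Tendsto (fun w : ℝ => π * m / 2 * w ^ 2) atTop atTop :=
      (tendsto_pow_atTop (two_ne_zero)).const_mul_atTop (hb_pos m hm)
    have h2 : Tendsto (fun w : ℝ => Real.exp (-(π * m / 2 * w ^ 2))) atTop (𝓝 0) :=
      Real.tendsto_exp_neg_atTop_nhds_zero.comp h1
    simpa using h2.const_mul (2 ^ (m + 1) : ℝ)
  apply squeeze_zero_norm' _ hg
  filter_upwards [eventually_ge_atTop (1:ℝ)] with w hw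
  have hfw := f_pos m w
  have h1 : |1 - Real.cos (β * w ^ 2)| ≤ 2 := by
    have := Real.cos_le_one (β * w ^ 2)
    have := Real.neg_one_le_cos (β * w ^ 2)
    rw [abs_le]; constructor <;> linarith
  have hG : |G m w| ≤ f m w := by
    unfold G
    rw [abs_div, abs_of_pos hfw, abs_of_pos (by linarith : (0:ℝ) < w)]
    rw [div_le_iff₀ (by linarith)]
    nlinarith
  unfold u
  rw [Real.norm_eq_abs, abs_mul]
  calc |G m w| * |1 - Real.cos (β * w ^ 2)| ≤ f m w * 2 :=
        mul_le_mul hG h1 (abs_nonneg _) hfw.le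
    _ ≤ 2 ^ (m + 1) * Real.exp (-(π * m / 2) * w ^ 2) := by
        have := f_le m w
        rw [show -(π * m / 2) * w ^ 2 = -π * m * w ^ 2 / 2 by ring, pow_succ]
        nlinarith [Real.exp_pos (-π * m * w ^ 2 / 2)]

lemma tendsto_u_zero (m : ℕ) (hm : 1 ≤ m) (β : ℝ) :
    Tendsto (u m β) (nhdsWithin 0 (Set.Ioi 0)) (𝓝 0) := by
  have hg : Tendsto (fun a : ℝ => 2 ^ m * β ^ 2 / 2 * a ^ 3) (nhdsWithin 0 (Set.Ioi 0)) (𝓝 0) := by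
    have : Tendsto (fun a : ℝ => 2 ^ m * β ^ 2 / 2 * a ^ 3) (𝓝 0) (𝓝 (2 ^ m * β ^ 2 / 2 * 0 ^ 3)) :=
      (continuous_const.mul (continuous_pow 3)).tendsto 0
    simpa using this.mono_left nhdsWithin_le_nhds
  apply squeeze_zero_norm' _ hg
  filter_upwards [self_mem_nhdsWithin] with a (ha : 0 < a)
  have hfa := f_pos m a
  have h1 : 1 - Real.cos (β * a ^ 2) ≤ β ^ 2 * a ^ 4 / 2 := by
    have := one_sub_cos_le (β * a ^ 2)
    nlinarith
  have h2 : 0 ≤ 1 - Real.cos (β * a ^ 2) := one_sub_cos_nonneg _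
  have hfle : f m a ≤ 2 ^ m := by
    have := f_le m a
    have he : Real.exp (-π * m * a ^ 2 / 2) ≤ 1 := by
      apply Real.exp_le_one_iff.2
      have hb := hb_pos m hm
      nlinarith [sq_nonneg a]
    nlinarith [pow_pos (two_pos (α := ℝ)) m]
  unfold u G
  rw [Real.norm_eq_abs, abs_of_nonneg (by positivity)]
  rw [div_mul_eq_mul_div, div_le_iff₀ ha]
  calc f m a * (1 - Real.cos (β * a ^ 2)) ≤ 2 ^ m * (β ^ 2 * a ^ 4 / 2) := by
        apply mul_le_mul hfle h1 h2 (by positivity)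
    _ = 2 ^ m * β ^ 2 / 2 * a ^ 3 * a := by ring

lemma integrable_fsin (m : ℕ) (hm : 1 ≤ m) (β : ℝ) :
    Integrable (fun w => f m w * Real.sin (β * w ^ 2)) := by
  apply Integrable.mono' (integrable_f m hm)
  · exact ((continuous_f m).mul (Real.continuous_sin.comp
      (continuous_const.mul (continuous_pow 2)))).aestronglyMeasurable
  · filter_upwards with w
    rw [Real.norm_eq_abs, abs_mul]
    have h1 : |Real.sin (β * w ^ 2)| ≤ 1 := Real.abs_sin_le_one _
    have h2 := f_pos m w
    calc |f m w| * |Real.sin (β * w ^ 2)| ≤ |f m w| * 1 :=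
          mul_le_mul_of_nonneg_left h1 (abs_nonneg _)
      _ = f m w := by rw [mul_one, abs_of_pos h2]

lemma continuousOn_G' (m : ℕ) : ContinuousOn (G' m) {w : ℝ | w ≠ 0} := by
  unfold G'
  apply ContinuousOn.div
  · exact (((continuous_f' m).mul continuous_id).sub (continuous_f m)).continuousOn
  · exact (continuous_pow 2).continuousOn
  · intro w hw
    exact pow_ne_zero 2 hw

lemma integrableOn_G'cos (m : ℕ) (hm : 1 ≤ m) (β : ℝ) {a : ℝ} (ha : 0 < a) :
    IntegrableOn (fun w => G' m w * (1 - Real.cos (β * w ^ 2))) (Set.Ioi a) := by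
  apply Integrable.mono' (g := fun w => (|f' m w| / a + f m w / a ^ 2) * 2)
  · exact (((integrable_f' m hm).abs.div_const _).add
      ((integrable_f m hm).div_const _)).mul_const 2 |>.integrableOn
  · apply ContinuousOn.aestronglyMeasurable _ measurableSet_Ioi
    apply ContinuousOn.mul
    · exact (continuousOn_G' m).mono (fun w hw => ne_of_gt (ha.trans hw))
    · exact (continuous_const.sub (Real.continuous_cos.comp
        (continuous_const.mul (continuous_pow 2)))).continuousOn
  · filter_upwards [ae_restrict_mem measurableSet_Ioi] with w (hw : a < w)
    have hw0 : 0 < w := ha.trans hw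
    have hw2 : (0:ℝ) < w ^ 2 := by positivity
    rw [Real.norm_eq_abs, abs_mul]
    have h1 : |1 - Real.cos (β * w ^ 2)| ≤ 2 := by
      have := Real.cos_le_one (β * w ^ 2)
      have := Real.neg_one_le_cos (β * w ^ 2)
      rw [abs_le]; constructor <;> linarith
    have hnum : |f' m w * w - f m w| ≤ |f' m w| * w + f m w := by
      refine (abs_sub _ _).trans ?_
      rw [abs_mul, abs_of_pos hw0, abs_of_pos (f_pos m w)]
    have k1 : |f' m w| * w ≤ |f' m w| / a * w ^ 2 := by
      rw [div_mul_eq_mul_div, le_div_iff₀ ha]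
      nlinarith [mul_nonneg (abs_nonneg (f' m w)) hw0.le]
    have k2 : f m w ≤ f m w / a ^ 2 * w ^ 2 := by
      rw [div_mul_eq_mul_div, le_div_iff₀ (by positivity : (0:ℝ) < a ^ 2)]
      have haw : a ^ 2 ≤ w ^ 2 := by nlinarith
      nlinarith [mul_le_mul_of_nonneg_left haw (f_pos m w).le]
    have h2 : |G' m w| ≤ |f' m w| / a + f m w / a ^ 2 := by
      unfold G'
      rw [abs_div, abs_of_pos hw2, div_le_iff₀ hw2]
      nlinarith [hnum, k1, k2]
    exact mul_le_mul h2 h1 (abs_nonneg _)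
      (add_nonneg (by positivity) (div_nonneg (f_pos m w).le (by positivity)))

lemma integrableOn_u' (m : ℕ) (hm : 1 ≤ m) (β : ℝ) {a : ℝ} (ha : 0 < a) :
    IntegrableOn (u' m β) (Set.Ioi a) := by
  unfold u'
  exact (integrableOn_G'cos m hm β ha).add
    (((integrable_fsin m hm β).integrableOn).const_mul (2 * β))

lemma ftc (m : ℕ) (hm : 1 ≤ m) (β : ℝ) {a : ℝ} (ha : 0 < a) :
    ∫ w in Set.Ioi a, u' m β w = - u m β a := by
  have h := integral_Ioi_of_hasDerivAt_of_tendsto'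
    (f := u m β) (f' := u' m β) (a := a) (m := 0)
    (fun x hx => hasDerivAt_u m hm β (lt_of_lt_of_le ha hx))
    (integrableOn_u' m hm β ha) (tendsto_u_atTop m hm β)
  rw [h]; ring

lemma split_integral (m : ℕ) (hm : 1 ≤ m) (β : ℝ) {a : ℝ} (ha : 0 < a) :
    2 * β * ∫ w in Set.Ioi a, f m w * Real.sin (β * w ^ 2)
      = - u m β a + ∫ w in Set.Ioi a, (-G' m w) * (1 - Real.cos (β * w ^ 2)) := by
  have hadd : ∫ w in Set.Ioi a, u' m β w
      = (∫ w in Set.Ioi a, G' m w * (1 - Real.cos (β * w ^ 2)))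
        + ∫ w in Set.Ioi a, 2 * β * (f m w * Real.sin (β * w ^ 2)) := by
    unfold u'
    exact integral_add (integrableOn_G'cos m hm β ha)
      (((integrable_fsin m hm β).integrableOn).const_mul (2 * β))
  have h1 : ∫ w in Set.Ioi a, 2 * β * (f m w * Real.sin (β * w ^ 2))
      = 2 * β * ∫ w in Set.Ioi a, f m w * Real.sin (β * w ^ 2) := integral_const_mul _ _
  have h2 : ∫ w in Set.Ioi a, (-G' m w) * (1 - Real.cos (β * w ^ 2))
      = - ∫ w in Set.Ioi a, G' m w * (1 - Real.cos (β * w ^ 2)) := by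
    rw [← integral_neg]
    congr 1; funext w; ring
  have := ftc m hm β ha
  rw [hadd, h1] at this
  rw [h2]
  linarith

lemma c_pos (m : ℕ) (hm : 1 ≤ m) {β : ℝ} (hβ : β ≠ 0) :
    0 < ∫ w in Set.Ioi 1, (-G' m w) * (1 - Real.cos (β * w ^ 2)) := by
  have hint : IntegrableOn (fun w => (-G' m w) * (1 - Real.cos (β * w ^ 2))) (Set.Ioi 1) := by
    have h0 := (integrableOn_G'cos m hm β one_pos).neg
    exact h0.congr (Filter.Eventually.of_forall fun w => by simp [neg_mul])
  have hnn : 0 ≤ᵐ[volume.restrict (Set.Ioi 1)]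
      fun w => (-G' m w) * (1 - Real.cos (β * w ^ 2)) := by
    filter_upwards [ae_restrict_mem measurableSet_Ioi] with w (hw : 1 < w)
    have h1 := G'_neg m hm (lt_trans one_pos hw)
    have h2 := one_sub_cos_nonneg (β * w ^ 2)
    simp only [Pi.zero_apply]
    nlinarith
  rw [setIntegral_pos_iff_support_of_nonneg_ae hnn hint]
  set S : Set ℝ := Set.range (fun n : ℤ => Real.sqrt ((n : ℝ) * (2 * π) / β)) with hS
  have hScount : S.Countable := Set.countable_range _
  have hsub : Set.Ioi 1 \ S ⊆
      Function.support (fun w => (-G' m w) * (1 - Real.cos (β * w ^ 2))) ∩ Set.Ioi 1 := by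
    rintro w ⟨(hw : 1 < w), hwS⟩
    have hw0 : 0 < w := lt_trans one_pos hw
    refine ⟨?_, hw⟩
    rw [Function.mem_support]
    intro hzero
    have hG := (G'_neg m hm hw0).ne
    have hcos : Real.cos (β * w ^ 2) = 1 := by
      rcases mul_eq_zero.1 hzero with h | h
      · exact absurd (neg_eq_zero.1 h) hG
      · linarith [sub_eq_zero.1 (by linarith : (1:ℝ) - Real.cos (β * w ^ 2) = 0)]
    rcases (Real.cos_eq_one_iff _).1 hcos with ⟨n, hn⟩
    apply hwS
    refine ⟨n, ?_⟩
    show Real.sqrt ((n : ℝ) * (2 * π) / β) = w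
    have heq : (n : ℝ) * (2 * π) / β = w ^ 2 := by
      rw [hn]
      exact mul_div_cancel_left₀ _ hβ
    rw [heq]
    exact Real.sqrt_sq hw0.le
  have hmeasS : volume S = 0 := hScount.measure_zero _
  have htop : volume (Set.Ioi (1:ℝ) \ S) = ⊤ := by
    rw [measure_diff_null hmeasS, Real.volume_Ioi]
  refine lt_of_lt_of_le ?_ (measure_mono hsub)
  rw [htop]
  exact ENNReal.zero_lt_top

lemma f_le_pow (m : ℕ) (hm : 1 ≤ m) (w : ℝ) : f m w ≤ 2 ^ m := by
  have h1 := f_le m w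
  have he : Real.exp (-π * m * w ^ 2 / 2) ≤ 1 := by
    apply Real.exp_le_one_iff.2
    have hb := hb_pos m hm
    nlinarith [sq_nonneg w]
  nlinarith [pow_pos (two_pos (α := ℝ)) m]

lemma key (m : ℕ) (hm : 1 ≤ m) {β : ℝ} (hβ : β ≠ 0) :
    0 < β * ∫ w in Set.Ioi 0, f m w * Real.sin (β * w ^ 2) := by
  set I := ∫ w in Set.Ioi 0, f m w * Real.sin (β * w ^ 2) with hI
  set c := ∫ w in Set.Ioi 1, (-G' m w) * (1 - Real.cos (β * w ^ 2)) with hc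
  have hcpos : 0 < c := c_pos m hm hβ
  set φ : ℝ → ℝ := fun a =>
    2 * β * (∫ w in Set.Ioc 0 a, f m w * Real.sin (β * w ^ 2)) - u m β a with hφ
  have h_ev : ∀ᶠ a in nhdsWithin 0 (Set.Ioi 0), φ a + c ≤ 2 * β * I := by
    filter_upwards [Ioc_mem_nhdsGT (zero_lt_one (α := ℝ))] with a ⟨ha, ha1⟩
    have hsplit : I = (∫ w in Set.Ioc 0 a, f m w * Real.sin (β * w ^ 2))
        + ∫ w in Set.Ioi a, f m w * Real.sin (β * w ^ 2) := by
      rw [hI, ← Set.Ioc_union_Ioi_eq_Ioi ha.le,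
        setIntegral_union (Set.Ioc_disjoint_Ioi le_rfl) measurableSet_Ioi
          (integrable_fsin m hm β).integrableOn (integrable_fsin m hm β).integrableOn]
    have hmono : c ≤ ∫ w in Set.Ioi a, (-G' m w) * (1 - Real.cos (β * w ^ 2)) := by
      apply setIntegral_mono_set
      · have h0 := (integrableOn_G'cos m hm β ha).neg
        exact h0.congr (Filter.Eventually.of_forall fun w => by simp [neg_mul])
      · filter_upwards [ae_restrict_mem measurableSet_Ioi] with w (hw : a < w)
        have h1 := G'_neg m hm (ha.trans hw)
        have h2 := one_sub_cos_nonneg (β * w ^ 2)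
        simp only [Pi.zero_apply]
        nlinarith
      · exact HasSubset.Subset.eventuallyLE (Set.Ioi_subset_Ioi ha1)
    have hsi := split_integral m hm β ha
    calc φ a + c
        ≤ φ a + ∫ w in Set.Ioi a, (-G' m w) * (1 - Real.cos (β * w ^ 2)) := by linarith
      _ = 2 * β * (∫ w in Set.Ioc 0 a, f m w * Real.sin (β * w ^ 2))
            + (- u m β a + ∫ w in Set.Ioi a, (-G' m w) * (1 - Real.cos (β * w ^ 2))) := by
          rw [hφ]; ring
      _ = 2 * β * (∫ w in Set.Ioc 0 a, f m w * Real.sin (β * w ^ 2))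
            + 2 * β * ∫ w in Set.Ioi a, f m w * Real.sin (β * w ^ 2) := by rw [← hsi]
      _ = 2 * β * I := by rw [hsplit]; ring
  have htend1 : Tendsto (fun a => 2 * β * ∫ w in Set.Ioc 0 a, f m w * Real.sin (β * w ^ 2))
      (nhdsWithin 0 (Set.Ioi 0)) (𝓝 0) := by
    have hg : Tendsto (fun a : ℝ => |2 * β| * (2 ^ m * a)) (nhdsWithin 0 (Set.Ioi 0)) (𝓝 0) := by
      have hcont : Tendsto (fun a : ℝ => |2 * β| * (2 ^ m * a)) (𝓝 0) (𝓝 (|2 * β| * (2 ^ m * 0))) :=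
        (continuous_const.mul (continuous_const.mul continuous_id)).tendsto 0
      simpa using hcont.mono_left nhdsWithin_le_nhds
    apply squeeze_zero_norm' _ hg
    filter_upwards [self_mem_nhdsWithin] with a (ha : 0 < a)
    rw [norm_mul, Real.norm_eq_abs]
    apply mul_le_mul_of_nonneg_left _ (abs_nonneg _)
    have hb : ‖∫ w in Set.Ioc 0 a, f m w * Real.sin (β * w ^ 2)‖
        ≤ 2 ^ m * (volume (Set.Ioc (0:ℝ) a)).toReal := by
      apply norm_setIntegral_le_of_norm_le_const
      rotate_left
      · intro x _
        rw [Real.norm_eq_abs, abs_mul, abs_of_pos (f_pos m x)]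
        have h1 : |Real.sin (β * x ^ 2)| ≤ 1 := Real.abs_sin_le_one _
        have h2 := f_le_pow m hm x
        nlinarith [f_pos m x, abs_nonneg (Real.sin (β * x ^ 2))]
      · rw [Real.volume_Ioc]
        exact ENNReal.ofReal_lt_top
    refine hb.trans ?_
    rw [Real.volume_Ioc, sub_zero, ENNReal.toReal_ofReal ha.le]
  have htend : Tendsto (fun a => φ a + c) (nhdsWithin 0 (Set.Ioi 0)) (𝓝 (0 - 0 + c)) := by
    exact ((htend1.sub (tendsto_u_zero m hm β)).add_const c)
  have hfin : 0 - 0 + c ≤ 2 * β * I := le_of_tendsto htend h_ev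
  nlinarith


lemma integrable_fcos (m : ℕ) (hm : 1 ≤ m) (β : ℝ) :
    Integrable (fun w => f m w * Real.cos (β * w ^ 2)) := by
  apply Integrable.mono' (integrable_f m hm)
  · exact ((continuous_f m).mul (Real.continuous_cos.comp
      (continuous_const.mul (continuous_pow 2)))).aestronglyMeasurable
  · filter_upwards with w
    rw [Real.norm_eq_abs, abs_mul]
    have h1 : |Real.cos (β * w ^ 2)| ≤ 1 := Real.abs_cos_le_one _
    have h2 := f_pos m w
    calc |f m w| * |Real.cos (β * w ^ 2)| ≤ |f m w| * 1 :=
          mul_le_mul_of_nonneg_left h1 (abs_nonneg _)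
      _ = f m w := by rw [mul_one, abs_of_pos h2]

end IntAux

open IntAux in
theorem integral_nonzero (m : ℕ) (hm : 1 ≤ m) (α : ℝ) :
    (∫ w in Set.Ioi (0 : ℝ),
        ((Real.exp (-π * m * w ^ 2 / 2) * (erfc (Real.sqrt (π / 2) * w)) ^ m : ℝ) : ℂ) *
          (Complex.cos (α * π * w ^ 2 / 2) + Complex.I * Complex.sin (α * π * w ^ 2 / 2))) ≠ 0 := by
  set β : ℝ := α * π / 2 with hβdef
  have hrw : (fun w : ℝ =>
      ((Real.exp (-π * m * w ^ 2 / 2) * (erfc (Real.sqrt (π / 2) * w)) ^ m : ℝ) : ℂ) *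
        (Complex.cos (α * π * w ^ 2 / 2) + Complex.I * Complex.sin (α * π * w ^ 2 / 2)))
      = fun w : ℝ =>
        ((f m w * Real.cos (β * w ^ 2) : ℝ) : ℂ)
          + ((f m w * Real.sin (β * w ^ 2) : ℝ) : ℂ) * Complex.I := by
    funext w
    have h1 : ((α : ℂ) * π * (w : ℂ) ^ 2 / 2) = ((β * w ^ 2 : ℝ) : ℂ) := by
      rw [hβdef]; push_cast; ring
    have h2 : (Real.exp (-π * m * w ^ 2 / 2) * (erfc (Real.sqrt (π / 2) * w)) ^ m : ℝ) = f m w := rfl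
    rw [h1, h2, ← Complex.ofReal_cos, ← Complex.ofReal_sin]
    push_cast
    ring
  rw [hrw]
  have hIcos : Integrable (fun w : ℝ => ((f m w * Real.cos (β * w ^ 2) : ℝ) : ℂ))
      (volume.restrict (Set.Ioi 0)) := ((integrable_fcos m hm β).integrableOn).ofReal
  have hIsin : Integrable (fun w : ℝ => ((f m w * Real.sin (β * w ^ 2) : ℝ) : ℂ) * Complex.I)
      (volume.restrict (Set.Ioi 0)) :=
    (((integrable_fsin m hm β).integrableOn).ofReal).mul_const Complex.I
  have e1 : (∫ w in Set.Ioi (0:ℝ), ((f m w * Real.cos (β * w ^ 2) : ℝ) : ℂ))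
      = ((∫ w in Set.Ioi (0:ℝ), f m w * Real.cos (β * w ^ 2) : ℝ) : ℂ) := integral_ofReal
  have e2 : (∫ w in Set.Ioi (0:ℝ), ((f m w * Real.sin (β * w ^ 2) : ℝ) : ℂ))
      = ((∫ w in Set.Ioi (0:ℝ), f m w * Real.sin (β * w ^ 2) : ℝ) : ℂ) := integral_ofReal
  rw [integral_add hIcos hIsin, integral_mul_const, e1, e2]
  intro hzero
  have him : (∫ w in Set.Ioi (0:ℝ), f m w * Real.sin (β * w ^ 2)) = 0 := by
    have := congrArg Complex.im hzero
    simpa using this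
  have hre : (∫ w in Set.Ioi (0:ℝ), f m w * Real.cos (β * w ^ 2)) = 0 := by
    have := congrArg Complex.re hzero
    simpa using this
  by_cases hα : α = 0
  · have hβ0 : β = 0 := by rw [hβdef, hα]; ring
    rw [hβ0] at hre
    simp only [zero_mul, Real.cos_zero, mul_one] at hre
    have hpos : 0 < ∫ w in Set.Ioi (0:ℝ), f m w := by
      rw [setIntegral_pos_iff_support_of_nonneg_ae]
      · have hs : Function.support (f m) = Set.univ := by
          ext w; simp [Function.mem_support, (f_pos m w).ne']
        rw [hs, Set.univ_inter, Real.volume_Ioi]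
        exact ENNReal.zero_lt_top
      · filter_upwards with w using (f_pos m w).le
      · exact (integrable_f m hm).integrableOn
    exact hpos.ne' hre
  · have hβ : β ≠ 0 := by
      rw [hβdef]
      exact div_ne_zero (mul_ne_zero hα Real.pi_ne_zero) two_ne_zero
    have := key m hm hβ
    rw [him] at this
    simp at this
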